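/- If a bipartite m-edge-coloured graph G is Γ-switch equivalent to a monochromatic graph (Γ transitive on [m]), then there is a switching sequence Σ transforming G to a monochromatic graph with |Σ| ≤ |V(G)| − 1 + c_Γ·|V(G)|·(|E(G)| − |V(G)| + 1), where c_Γ is a constant depending only on Γ and m (namely the maximum diameter of a component of the reconfiguration graph of edge-colourings of the labelled 4-cycle under single switches). -/

import Mathlib

open Equiv

/-- An `m`-edge-coloured graph on vertex set `V`: `G u v = some i` means there is an
edge `uv` of colour `i` (stored symmetrically), `none` means no edge. -/
abbrev EC (V : Type) (m : ℕ) := V → V → Option (Fin m)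

/-- The colouring is stored symmetrically. -/
def ECSymm {V : Type} {m : ℕ} (G : EC V m) : Prop := ∀ u v, G u v = G v u

/-- Switching at a vertex `v` with a permutation `π` of the colours. -/
def ECswitch {V : Type} [DecidableEq V] {m : ℕ} (G : EC V m) (v : V) (π : Perm (Fin m)) :
    EC V m :=
  fun x y => if x = v ∨ y = v then (G x y).map π else G x y

/-- Switching with respect to a sequence of (vertex, permutation) pairs, applied in order. -/
def ECswitchSeq {V : Type} [DecidableEq V] {m : ℕ} (G : EC V m) :
    List (V × Perm (Fin m)) → EC V m
  | [] => G
  | (v, π) :: rest => ECswitchSeq (ECswitch G v π) rest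

/-- All permutations occurring in the sequence belong to the group `Γ`. -/
def ValidSeq {V : Type} {m : ℕ} (Γ : Subgroup (Perm (Fin m)))
    (L : List (V × Perm (Fin m))) : Prop :=
  ∀ p ∈ L, p.2 ∈ Γ

/-- `Γ`-switch equivalence of two `m`-edge-coloured graphs on the same vertex set. -/
def SwEquiv {V : Type} [DecidableEq V] {m : ℕ} (Γ : Subgroup (Perm (Fin m)))
    (G G' : EC V m) : Prop :=
  ∃ L, ValidSeq Γ L ∧ ECswitchSeq G L = G'

/-- `G` is monochromatic of colour `i`. -/
def Mono {V : Type} {m : ℕ} (G : EC V m) (i : Fin m) : Prop :=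
  ∀ u v j, G u v = some j → j = i

/-- `G` admits a `Γ`-switchable homomorphism to `K₂^i` (the single edge of colour `i`). -/
def SwHomK2 {V : Type} [DecidableEq V] {m : ℕ} (Γ : Subgroup (Perm (Fin m)))
    (G : EC V m) (i : Fin m) : Prop :=
  ∃ L, ValidSeq Γ L ∧ ∃ f : V → Bool,
    ∀ u v j, ECswitchSeq G L u v = some j → f u ≠ f v ∧ j = i

/-- A `Γ`-switchable homomorphism between `m`-edge-coloured graphs. -/
def SwHom {V W : Type} [DecidableEq V] {m : ℕ} (Γ : Subgroup (Perm (Fin m)))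
    (G : EC V m) (H : EC W m) : Prop :=
  ∃ L, ValidSeq Γ L ∧ ∃ f : V → W,
    ∀ u v j, ECswitchSeq G L u v = some j → H (f u) (f v) = some j

/-- `Γ` acts transitively on the colour set `[m]`. -/
def TransOn {m : ℕ} (Γ : Subgroup (Perm (Fin m))) : Prop :=
  ∀ i j : Fin m, ∃ π ∈ Γ, π i = j

/-- `G` is bipartite. -/
def Bip {V : Type} {m : ℕ} (G : EC V m) : Prop :=
  ∃ g : V → Bool, ∀ u v, (G u v).isSome → g u ≠ g v

/-- `G` (its underlying graph) is connected. -/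
def Conn {V : Type} {m : ℕ} (G : EC V m) : Prop :=
  ∀ u v : V, Relation.ReflTransGen (fun a b => (G a b).isSome) u v

/-- The `m`-edge-coloured cycle of length `n` on `ZMod n`, where the edge from `x` to
`x + 1` has colour `c x`. -/
def cycleFromFn {m : ℕ} (n : ℕ) (c : ZMod n → Fin m) : EC (ZMod n) m :=
  fun x y => if y = x + 1 then some (c x) else if x = y + 1 then some (c y) else none

/-- The cycle of length `n` that is nearly monochromatic of colours `(i, j)`:
all edges have colour `i` except the edge from `-1` (that is, `n - 1`) to `0`,
which has colour `j`. -/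
def nearCycle {m : ℕ} (n : ℕ) (i j : Fin m) : EC (ZMod n) m :=
  cycleFromFn n (fun x => if x = -1 then j else i)

/-- The monochromatic cycle of length `n` of colour `i`. -/
def monoCycle {m : ℕ} (n : ℕ) (i : Fin m) : EC (ZMod n) m :=
  cycleFromFn n (fun _ => i)

/-- The `Γ`-substitution class `⟨i⟩`: the colours `j` such that the `4`-cycle nearly
monochromatic of colours `(i, j)` can be switched to be monochromatic of colour `i`. -/
def subClass {m : ℕ} (Γ : Subgroup (Perm (Fin m))) (i : Fin m) : Set (Fin m) :=
  {j | SwEquiv Γ (nearCycle 4 i j) (monoCycle 4 i)}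

/-- The underlying simple graph of an `m`-edge-coloured graph. -/
def ECtoSimple {V : Type} {m : ℕ} (G : EC V m) (h : ECSymm G) : SimpleGraph V where
  Adj u v := u ≠ v ∧ (G u v).isSome
  symm := by
    refine ⟨?_⟩
    intro u v hv
    exact ⟨Ne.symm hv.1, by rw [h v u]; exact hv.2⟩
  loopless := by refine ⟨?_⟩; intro v hv; exact hv.1 rfl

/-- The number of edges of an `m`-edge-coloured graph. -/
def edgeCount {V : Type} [Fintype V] {m : ℕ} (G : EC V m) : ℕ :=
  (Finset.univ.filter (fun p : V × V => (G p.1 p.2).isSome)).card / 2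

open scoped commutatorElement

namespace SwAux

variable {m : ℕ} {Γ : Subgroup (Perm (Fin m))}

def toSeq {V : Type} (L : List (V × ↥Γ)) : List (V × Perm (Fin m)) :=
  L.map fun p => (p.1, (p.2 : Perm (Fin m)))

lemma validSeq_toSeq {V : Type} (L : List (V × ↥Γ)) : ValidSeq Γ (toSeq L) := by
  intro p hp
  simp only [toSeq, List.mem_map] at hp
  obtain ⟨q, _, rfl⟩ := hp
  exact q.2.2

def effG {V : Type} [DecidableEq V] (u v : V) : List (V × ↥Γ) → ↥Γ
  | [] => 1
  | e :: t => effG u v t * (if u = e.1 ∨ v = e.1 then e.2 else 1)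

def vprod {V : Type} [DecidableEq V] (w : V) : List (V × ↥Γ) → ↥Γ
  | [] => 1
  | e :: t => vprod w t * (if w = e.1 then e.2 else 1)

lemma run_eq {V : Type} [DecidableEq V] (u v : V) (L : List (V × ↥Γ)) :
    ∀ G : EC V m, ECswitchSeq G (toSeq L) u v = (G u v).map (effG u v L : Perm (Fin m)) := by
  induction L with
  | nil =>
    intro G
    simp [toSeq, ECswitchSeq, effG]
  | cons e t ih =>
    intro G
    obtain ⟨w, a⟩ := e
    show ECswitchSeq (ECswitch G w (a : Perm (Fin m))) (toSeq t) u v = _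
    rw [ih]
    by_cases h : u = w ∨ v = w
    · simp only [ECswitch, h, if_true, effG, if_pos h, Option.map_map]
      cases G u v <;> simp
    · simp [ECswitch, h, effG]

lemma effG_append {V : Type} [DecidableEq V] (u v : V) (L₁ L₂ : List (V × ↥Γ)) :
    effG u v (L₁ ++ L₂) = effG u v L₂ * effG u v L₁ := by
  induction L₁ with
  | nil => simp [effG]
  | cons e t ih => simp [effG, ih, mul_assoc]

lemma effG_symm {V : Type} [DecidableEq V] (u v : V) (L : List (V × ↥Γ)) :
    effG u v L = effG v u L := by
  induction L with
  | nil => rfl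
  | cons e t ih => simp [effG, ih, or_comm]

lemma of_effG {V : Type} [DecidableEq V] {u v : V} (huv : u ≠ v) (L : List (V × ↥Γ)) :
    Abelianization.of (effG u v L) =
      Abelianization.of (vprod u L) * Abelianization.of (vprod v L) := by
  induction L with
  | nil => simp [effG, vprod]
  | cons e t ih =>
    obtain ⟨w, a⟩ := e
    simp only [effG, vprod, map_mul, ih]
    have h3 : Abelianization.of (if u = w ∨ v = w then a else 1) =
        Abelianization.of (if u = w then a else 1) *
          Abelianization.of (if v = w then a else 1) := by
      by_cases h1 : u = w <;> by_cases h2 : v = w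
      · exact absurd (h1.trans h2.symm) huv
      · simp [h1, h2]
      · simp [h1, h2]
      · simp [h1, h2]
    rw [h3, mul_mul_mul_comm]

lemma vprod_map_of_not_mem {V : Type} [DecidableEq V] (σ : V → ↥Γ) (w : V)
    (ws : List V) (hw : w ∉ ws) : vprod w (ws.map fun x => (x, σ x)) = 1 := by
  induction ws with
  | nil => rfl
  | cons x t ih =>
    simp only [List.mem_cons, not_or] at hw
    simp [vprod, hw.1, ih hw.2]

lemma vprod_map_of_nodup {V : Type} [DecidableEq V] (σ : V → ↥Γ) (w : V)
    (ws : List V) (hnd : ws.Nodup) (hw : w ∈ ws) :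
    vprod w (ws.map fun x => (x, σ x)) = σ w := by
  induction ws with
  | nil => cases hw
  | cons x t ih =>
    rw [List.nodup_cons] at hnd
    rcases List.mem_cons.mp hw with rfl | hwt
    · simp [vprod, vprod_map_of_not_mem σ w t hnd.1]
    · have hwx : ¬ w = x := fun h => hnd.1 (h ▸ hwt)
      simp [vprod, hwx, ih hnd.2 hwt]

def block {V : Type} (u v : V) (p : ↥Γ × ↥Γ) : List (V × ↥Γ) :=
  [(u, p.2⁻¹), (v, p.1⁻¹), (u, p.2), (v, p.1)]

lemma effG_block_self {V : Type} [DecidableEq V] {u v : V} (p : ↥Γ × ↥Γ) :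
    effG u v (block u v p) = ⁅p.1, p.2⁆ := by
  simp only [effG, block, commutatorElement_def]
  simp only [eq_self_iff_true, or_true, true_or, if_true]
  group

lemma effG_block_other {V : Type} [DecidableEq V] {u v : V} (huv : u ≠ v) (p : ↥Γ × ↥Γ)
    {x y : V} (h1 : ¬(x = u ∧ y = v)) (h2 : ¬(x = v ∧ y = u)) :
    effG x y (block u v p) = 1 := by
  by_cases hA : x = u ∨ y = u <;> by_cases hB : x = v ∨ y = v
  · exfalso
    rcases hA with h | h <;> rcases hB with h' | h'
    · exact huv (h.symm.trans h')
    · exact h1 ⟨h, h'⟩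
    · exact h2 ⟨h', h⟩
    · exact huv (h.symm.trans h')
  · simp only [effG, block, if_pos hA, if_neg hB]
    group
  · simp only [effG, block, if_pos hB, if_neg hA]
    group
  · simp [effG, block, hA, hB]

def realize {V : Type} (u v : V) (l : List (↥Γ × ↥Γ)) : List (V × ↥Γ) :=
  l.flatMap (block u v)

lemma effG_realize_self {V : Type} [DecidableEq V] {u v : V} (l : List (↥Γ × ↥Γ)) :
    effG u v (realize u v l) = ((l.map fun p => ⁅p.1, p.2⁆).reverse).prod := by
  induction l with
  | nil => simp [realize, effG]
  | cons p t ih =>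
    show effG u v (block u v p ++ realize u v t) = _
    rw [effG_append, ih, effG_block_self]
    simp

lemma effG_realize_other {V : Type} [DecidableEq V] {u v : V} (huv : u ≠ v)
    {x y : V} (h1 : ¬(x = u ∧ y = v)) (h2 : ¬(x = v ∧ y = u)) (l : List (↥Γ × ↥Γ)) :
    effG x y (realize u v l) = 1 := by
  induction l with
  | nil => rfl
  | cons p t ih =>
    show effG x y (block u v p ++ realize u v t) = 1
    rw [effG_append, ih, effG_block_other huv p h1 h2, one_mul]

lemma realize_length {V : Type} (u v : V) (l : List (↥Γ × ↥Γ)) :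
    (realize u v l).length = 4 * l.length := by
  induction l with
  | nil => rfl
  | cons p t ih =>
    show (block u v p ++ realize u v t).length = _
    simp [block, ih, List.length_cons]
    ring

lemma exists_comm_list (d : ↥Γ) (hd : d ∈ commutator ↥Γ) :
    ∃ l : List (↥Γ × ↥Γ), (l.map fun p => ⁅p.1, p.2⁆).prod = d := by
  rw [commutator_eq_closure] at hd
  refine Subgroup.closure_induction
    (p := fun g _ => ∃ l : List (↥Γ × ↥Γ), (l.map fun p => ⁅p.1, p.2⁆).prod = g)
    ?_ ?_ ?_ ?_ hd
  · rintro x ⟨a, b, rfl⟩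
    exact ⟨[(a, b)], by simp⟩
  · exact ⟨[], by simp⟩
  · rintro x y _ _ ⟨lx, hx⟩ ⟨ly, hy⟩
    exact ⟨lx ++ ly, by simp [hx, hy]⟩
  · rintro x _ ⟨l, rfl⟩
    refine ⟨l.reverse.map fun p => (p.2, p.1), ?_⟩
    have h : ((l.reverse.map fun p : ↥Γ × ↥Γ => (p.2, p.1)).map fun p => ⁅p.1, p.2⁆) =
        ((l.map fun p => ⁅p.1, p.2⁆).map fun x => x⁻¹).reverse := by
      simp [List.map_reverse, List.map_map, Function.comp_def, commutatorElement_inv]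
    rw [h, ← List.prod_inv_reverse]

lemma comm_bound : ∃ K : ℕ, ∀ d : ↥Γ, d ∈ commutator ↥Γ →
    ∃ l : List (↥Γ × ↥Γ), l.length ≤ K ∧ (l.map fun p => ⁅p.1, p.2⁆).prod = d := by
  classical
  have : Finite ↥Γ := inferInstance
  obtain ⟨K, hK⟩ := Finite.exists_le (fun d : ↥Γ =>
    if h : d ∈ commutator ↥Γ then (exists_comm_list d h).choose.length else 0)
  refine ⟨K, fun d hd => ⟨(exists_comm_list d hd).choose, ?_, (exists_comm_list d hd).choose_spec⟩⟩
  simpa only [dif_pos hd] using hK d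

lemma mem_commutator_of_of_eq_one {G : Type*} [Group G] {x : G}
    (h : Abelianization.of x = 1) : x ∈ commutator G :=
  (QuotientGroup.eq_one_iff x).mp h


lemma effG_flatMap_one {V : Type} [DecidableEq V] (u v : V) (corr : V × V → List (V × ↥Γ)) :
    ∀ qs : List (V × V), (∀ q ∈ qs, effG u v (corr q) = 1) →
      effG u v (qs.flatMap corr) = 1 := by
  intro qs
  induction qs with
  | nil => intro _; rfl
  | cons q t ih =>
    intro hone
    rw [List.flatMap_cons, effG_append, ih (fun q hq => hone q (List.mem_cons_of_mem _ hq)),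
      hone q List.mem_cons_self, one_mul]

lemma effG_flatMap_single {V : Type} [DecidableEq V] (u v : V)
    (corr : V × V → List (V × ↥Γ)) (D : ↥Γ) (q₀ : V × V) :
    ∀ qs : List (V × V), qs.Nodup → q₀ ∈ qs →
      effG u v (corr q₀) = D →
      (∀ q ∈ qs, q ≠ q₀ → effG u v (corr q) = 1) →
      effG u v (qs.flatMap corr) = D := by
  intro qs
  induction qs with
  | nil => intro _ h; cases h
  | cons q t ih =>
    intro hnd hq₀ hD hother
    rw [List.nodup_cons] at hnd
    rw [List.flatMap_cons, effG_append]
    rcases List.mem_cons.mp hq₀ with rfl | hq₀t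
    · rw [effG_flatMap_one u v corr t
        (fun q hq => hother q (List.mem_cons_of_mem _ hq) (fun h => hnd.1 (h ▸ hq))),
        hD, one_mul]
    · rw [hother q List.mem_cons_self (fun h => hnd.1 (h ▸ hq₀t)), mul_one]
      exact ih hnd.2 hq₀t hD (fun q hq hne => hother q (List.mem_cons_of_mem _ hq) hne)

end SwAux

open SwAux in
/-- If a bipartite `m`-edge-coloured graph `G` is `Γ`-switch
equivalent to a monochromatic graph (`Γ` transitive on `[m]`), then there is such a
switching sequence `Σ` with
`|Σ| ≤ |V(G)| - 1 + c_Γ·|V(G)|·(|E(G)| - |V(G)| + 1)`,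
where the constant `c_Γ` depends only on `Γ` and `m`. -/
theorem switch_sequence_length_bound {m : ℕ} (Γ : Subgroup (Perm (Fin m)))
    (htr : TransOn Γ) :
    ∃ c : ℕ, ∀ (V : Type) [Fintype V] [DecidableEq V] (G : EC V m),
      ECSymm G → Bip G →
      (∃ j L, ValidSeq Γ L ∧ Mono (ECswitchSeq G L) j) →
      ∃ j L, ValidSeq Γ L ∧ Mono (ECswitchSeq G L) j ∧
        L.length ≤ Fintype.card V - 1 +
          c * Fintype.card V * (edgeCount G - Fintype.card V + 1) := by
  classical
  obtain ⟨K, hK⟩ := comm_bound (Γ := Γ)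
  refine ⟨4 * K + 1, ?_⟩
  intro V _ _ G hsym hbip hex
  obtain ⟨j, L₀, hval, hmono⟩ := hex
  obtain ⟨g, hg⟩ := hbip
  by_cases hV0 : IsEmpty V
  · exact ⟨j, [], fun p hp => absurd hp List.not_mem_nil,
      fun u _ _ _ => (hV0.false u).elim, Nat.zero_le _⟩
  have hNE : Nonempty V := not_isEmpty_iff.mp hV0
  have hV : 1 ≤ Fintype.card V := Fintype.card_pos
  -- bundle the witness sequence
  set L' : List (V × ↥Γ) := L₀.attach.map (fun p => (p.1.1, ⟨p.1.2, hval p.1 p.2⟩)) with hL'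
  have hts : toSeq L' = L₀ := by
    rw [hL']
    simp only [toSeq, List.map_map, Function.comp_def]
    simpa using List.attach_map_subtype_val L₀
  have hrunL' : ∀ u v : V, ECswitchSeq G L₀ u v =
      (G u v).map ((effG u v L' : ↥Γ) : Perm (Fin m)) := by
    intro u v
    rw [← hts, run_eq]
  -- a linear order on V
  set rank : V → ℕ := fun w => ((Fintype.equivFin V) w : ℕ) with hrankdef
  have hrank : Function.Injective rank := by
    intro a b h
    exact (Fintype.equivFin V).injective (Fin.val_injective h)
  -- round 1: one switch per vertex
  set σ : V → ↥Γ := fun w => vprod w L' with hσ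
  set R : List (V × ↥Γ) := (Finset.univ.toList (α := V)).map (fun w => (w, σ w)) with hR
  have hvpR : ∀ w : V, vprod w R = σ w := by
    intro w
    exact vprod_map_of_nodup σ w _ (Finset.nodup_toList _)
      (Finset.mem_toList.mpr (Finset.mem_univ w))
  have habR : ∀ u v : V, u ≠ v →
      Abelianization.of (effG u v R) = Abelianization.of (effG u v L') := by
    intro u v huv
    rw [of_effG huv R, of_effG huv L', hvpR u, hvpR v]
  -- corrections
  set Ef : Finset (V × V) :=
    Finset.univ.filter (fun p : V × V => (G p.1 p.2).isSome ∧ rank p.1 < rank p.2) with hEf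
  set dd : V × V → ↥Γ := fun q => effG q.1 q.2 L' * (effG q.1 q.2 R)⁻¹ with hdd
  have hddmem : ∀ q : V × V, q.1 ≠ q.2 → dd q ∈ commutator ↥Γ := by
    intro q hq
    apply mem_commutator_of_of_eq_one
    rw [hdd]
    simp only [map_mul, map_inv, habR q.1 q.2 hq]
    exact mul_inv_cancel _
  set rep : V × V → List (↥Γ × ↥Γ) :=
    fun q => if h : q.1 ≠ q.2 then (hK (dd q) (hddmem q h)).choose else [] with hrep
  have hrep_len : ∀ q, (rep q).length ≤ K := by
    intro q
    by_cases h : q.1 ≠ q.2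
    · rw [hrep]; simp only [dif_pos h]; exact (hK (dd q) (hddmem q h)).choose_spec.1
    · rw [hrep]; simp only [dif_neg h]; exact Nat.zero_le K
  have hrep_prod : ∀ q, (h : q.1 ≠ q.2) →
      ((rep q).map fun p => ⁅p.1, p.2⁆).prod = dd q := by
    intro q h
    rw [hrep]; simp only [dif_pos h]; exact (hK (dd q) (hddmem q h)).choose_spec.2
  set corr : V × V → List (V × ↥Γ) := fun q => realize q.1 q.2 (rep q).reverse with hcorr
  have hcorr_self : ∀ q : V × V, q.1 ≠ q.2 → effG q.1 q.2 (corr q) = dd q := by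
    intro q h
    rw [hcorr]
    simp only
    rw [effG_realize_self, List.map_reverse, List.reverse_reverse, hrep_prod q h]
  have hcorr_other : ∀ (q : V × V) (x y : V), q.1 ≠ q.2 →
      ¬(x = q.1 ∧ y = q.2) → ¬(x = q.2 ∧ y = q.1) → effG x y (corr q) = 1 := by
    intro q x y h h1 h2
    rw [hcorr]
    exact effG_realize_other h h1 h2 _
  -- the final sequence
  set Lb : List (V × ↥Γ) := R ++ Ef.toList.flatMap corr with hLb
  refine ⟨j, toSeq Lb, validSeq_toSeq Lb, ?_, ?_⟩
  · -- monochromatic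
    intro u v k hk
    rw [run_eq] at hk
    rw [Option.map_eq_some_iff] at hk
    obtain ⟨c0, hc0, hck⟩ := hk
    have hsome : (G u v).isSome := by rw [hc0]; rfl
    have huv : u ≠ v := by
      rintro rfl
      exact (hg u u hsome) rfl
    have key : effG u v (Ef.toList.flatMap corr) = effG u v L' * (effG u v R)⁻¹ := by
      rcases lt_trichotomy (rank u) (rank v) with hlt | heqr | hgt
      · have hq₀ : ((u, v) : V × V) ∈ Ef := by
          rw [hEf]; exact Finset.mem_filter.mpr ⟨Finset.mem_univ _, hsome, hlt⟩
        refine effG_flatMap_single u v corr _ (u, v) Ef.toList (Finset.nodup_toList Ef)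
          (Finset.mem_toList.mpr hq₀) ?_ ?_
        · exact hcorr_self (u, v) huv
        · intro q hq hne
          have hqEf := Finset.mem_toList.mp hq
          rw [hEf] at hqEf
          have hq12 : rank q.1 < rank q.2 := (Finset.mem_filter.mp hqEf).2.2
          refine hcorr_other q u v (fun h => by rw [h] at hq12; exact lt_irrefl _ hq12) ?_ ?_
          · rintro ⟨h1, h2⟩
            exact hne (Prod.ext_iff.mpr ⟨h1.symm, h2.symm⟩)
          · rintro ⟨h1, h2⟩
            rw [← h1, ← h2] at hq12
            exact absurd hlt (not_lt.mpr hq12.le)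
      · exact absurd (hrank heqr) huv
      · have hsome' : (G v u).isSome := by rw [← hsym u v]; exact hsome
        have hq₀ : ((v, u) : V × V) ∈ Ef := by
          rw [hEf]; exact Finset.mem_filter.mpr ⟨Finset.mem_univ _, hsome', hgt⟩
        refine effG_flatMap_single u v corr _ (v, u) Ef.toList (Finset.nodup_toList Ef)
          (Finset.mem_toList.mpr hq₀) ?_ ?_
        · have h1 := hcorr_self (v, u) huv.symm
          rw [effG_symm u v]
          rw [h1, hdd]
          simp only
          rw [effG_symm v u L', effG_symm v u R]
        · intro q hq hne
          have hqEf := Finset.mem_toList.mp hq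
          rw [hEf] at hqEf
          have hq12 : rank q.1 < rank q.2 := (Finset.mem_filter.mp hqEf).2.2
          refine hcorr_other q u v (fun h => by rw [h] at hq12; exact lt_irrefl _ hq12) ?_ ?_
          · rintro ⟨h1, h2⟩
            rw [← h1, ← h2] at hq12
            exact absurd hgt (not_lt.mpr hq12.le)
          · rintro ⟨h1, h2⟩
            exact hne (Prod.ext_iff.mpr ⟨h2.symm, h1.symm⟩)
    have heff : effG u v Lb = effG u v L' := by
      rw [hLb, effG_append, key, inv_mul_cancel_right]
    rw [heff] at hck
    apply hmono u v k
    rw [hrunL' u v, hc0, ← hck]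
    rfl
  · -- length bound
    have hlen1 : (toSeq Lb).length = Lb.length := List.length_map _
    have hlenR : R.length = Fintype.card V := by
      rw [hR, List.length_map, Finset.length_toList, Finset.card_univ]
    have hlenflat : (Ef.toList.flatMap corr).length ≤ Ef.card * (4 * K) := by
      have h4 : ∀ q, (corr q).length ≤ 4 * K := by
        intro q
        rw [hcorr]
        simp only
        rw [realize_length, List.length_reverse]
        exact Nat.mul_le_mul_left 4 (hrep_len q)
      have : ∀ qs : List (V × V), (qs.flatMap corr).length ≤ qs.length * (4 * K) := by
        intro qs
        induction qs with
        | nil => simp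
        | cons q t ih =>
          rw [List.flatMap_cons, List.length_append, List.length_cons]
          calc (corr q).length + (t.flatMap corr).length ≤ 4 * K + t.length * (4 * K) :=
                Nat.add_le_add (h4 q) ih
            _ = (t.length + 1) * (4 * K) := by ring
      calc (Ef.toList.flatMap corr).length ≤ Ef.toList.length * (4 * K) := this _
        _ = Ef.card * (4 * K) := by rw [Finset.length_toList]
    -- |Ef| ≤ edgeCount G
    set S : Finset (V × V) := Finset.univ.filter (fun p : V × V => (G p.1 p.2).isSome) with hS
    have hEfsub : Ef ⊆ S := by
      intro p hp
      rw [hEf] at hp; rw [hS]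
      exact Finset.mem_filter.mpr ⟨Finset.mem_univ _, (Finset.mem_filter.mp hp).2.1⟩
    have hEfswap : Ef.image Prod.swap ⊆ S := by
      intro p hp
      obtain ⟨q, hq, hqp⟩ := Finset.mem_image.mp hp
      rw [hEf] at hq; rw [hS]
      refine Finset.mem_filter.mpr ⟨Finset.mem_univ _, ?_⟩
      rw [← hqp]
      show (G q.2 q.1).isSome
      rw [← hsym q.1 q.2]
      exact (Finset.mem_filter.mp hq).2.1
    have hdisj : Disjoint Ef (Ef.image Prod.swap) := by
      rw [Finset.disjoint_left]
      intro p hp hp'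
      obtain ⟨q, hq, hqp⟩ := Finset.mem_image.mp hp'
      rw [hEf] at hp hq
      have h1 : rank p.1 < rank p.2 := (Finset.mem_filter.mp hp).2.2
      have h2 : rank q.1 < rank q.2 := (Finset.mem_filter.mp hq).2.2
      rw [← hqp] at h1
      simp only [Prod.fst_swap, Prod.snd_swap] at h1
      exact absurd h2 (not_lt.mpr h1.le)
    have hcard2 : Ef.card * 2 ≤ S.card := by
      have hu : (Ef ∪ Ef.image Prod.swap) ⊆ S := Finset.union_subset hEfsub hEfswap
      have := Finset.card_le_card hu
      rw [Finset.card_union_of_disjoint hdisj,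
        Finset.card_image_of_injective _ Prod.swap_injective] at this
      omega
    have hEfcard : Ef.card ≤ edgeCount G := by
      have : edgeCount G = S.card / 2 := rfl
      rw [this]
      exact (Nat.le_div_iff_mul_le (by norm_num)).mpr hcard2
    -- arithmetic
    set vv := Fintype.card V with hvv
    set E := edgeCount G with hE
    have hEle : E ≤ vv * (E - vv + 1) := by
      rcases le_or_gt E vv with h | h
      · calc E ≤ vv := h
          _ = vv * 1 := (Nat.mul_one vv).symm
          _ ≤ vv * (E - vv + 1) := Nat.mul_le_mul_left vv (by omega)
      · have hd : E = vv + (E - vv) := by omega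
        have hvd : E - vv ≤ vv * (E - vv) := Nat.le_mul_of_pos_left _ hV
        calc E = vv + (E - vv) := hd
          _ ≤ vv + vv * (E - vv) := by omega
          _ = vv * (E - vv + 1) := by ring
    have ha1 : 1 ≤ vv * (E - vv + 1) := by
      have : 1 * 1 ≤ vv * (E - vv + 1) := Nat.mul_le_mul hV (by omega)
      omega
    have hfin : Lb.length = R.length + (Ef.toList.flatMap corr).length := by
      rw [hLb, List.length_append]
    rw [hlen1, hfin, hlenR]
    have hstep : (Ef.toList.flatMap corr).length ≤ (vv * (E - vv + 1)) * (4 * K) := by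
      calc (Ef.toList.flatMap corr).length ≤ Ef.card * (4 * K) := hlenflat
        _ ≤ (vv * (E - vv + 1)) * (4 * K) :=
            Nat.mul_le_mul_right _ (hEfcard.trans hEle)
    have hexpand : (4 * K + 1) * vv * (E - vv + 1) =
        (vv * (E - vv + 1)) * (4 * K) + vv * (E - vv + 1) := by ring
    rw [hexpand]
    have hvv1 : vv ≤ vv - 1 + vv * (E - vv + 1) := by omega
    omega
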